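/- For every graph G and every k ≥ 2: the k-flip-depth of G is at most the SC-depth of G, and the SC-depth of G is at most 3k² times the k-flip-depth of G. -/

import Mathlib

open Classical

variable {V : Type}

/-- Reachability inside the vertex set `s` along edges of `H`. -/
def Reach (s : Finset V) (H : V → V → Prop) : V → V → Prop :=
  Relation.ReflTransGen (fun a b => a ∈ s ∧ b ∈ s ∧ H a b)

open Classical in
/-- The vertex set of the connected component of `v` in the graph `H` restricted to `s`. -/
noncomputable def component (s : Finset V) (H : V → V → Prop) (v : V) : Finset V :=
  s.filter (Reach s H v)

/-- `C` is the vertex set of a connected component of `H` restricted to `s`. -/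
def IsComponent (s : Finset V) (H : V → V → Prop) (C : Finset V) : Prop :=
  ∃ v ∈ s, C = component s H v

/-- `H` is a `k`-flip of `E` on the vertex set `s`: there is a partition of `s` into at
most `k` parts (given by `P`) and a symmetric set `F` of pairs of parts such that the
adjacency between flipped pairs of parts is complemented; self-loops are preserved. -/
def IsKFlip (k : ℕ) (s : Finset V) (E H : V → V → Prop) : Prop :=
  ∃ (P : V → Fin k) (F : Fin k → Fin k → Prop),
    (∀ i j, F i j ↔ F j i) ∧
    (∀ u ∈ s, ∀ v ∈ s, u ≠ v →
      (H u v ↔ ((F (P u) (P v) ∧ ¬ E u v) ∨ (¬ F (P u) (P v) ∧ E u v)))) ∧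
    (∀ u ∈ s, (H u u ↔ E u u))

/-- `H` is a subset-complement of `E` on `s`: the adjacency inside some subset `A`
is complemented; self-loops are preserved. -/
def IsSC (s : Finset V) (E H : V → V → Prop) : Prop :=
  ∃ A : Finset V,
    (∀ u ∈ s, ∀ v ∈ s, u ≠ v →
      (H u v ↔ ((u ∈ A ∧ v ∈ A ∧ ¬ E u v) ∨ (¬ (u ∈ A ∧ v ∈ A) ∧ E u v)))) ∧
    (∀ u ∈ s, (H u u ↔ E u u))

/-- `FlipDepthLe k s E d`: the `k`-flip-depth of the graph `E` on vertex set `s` is at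
most `d`.  The single-vertex graph has depth `0`; otherwise one may perform a `k`-flip
and recurse on all connected components. -/
inductive FlipDepthLe (k : ℕ) : Finset V → (V → V → Prop) → ℕ → Prop
  | single (v : V) (E : V → V → Prop) (d : ℕ) : FlipDepthLe k {v} E d
  | step (s : Finset V) (E H : V → V → Prop) (d : ℕ) :
      IsKFlip k s E H →
      (∀ C, IsComponent s H C → FlipDepthLe k C H d) →
      FlipDepthLe k s E (d + 1)

/-- `SCDepthLe s E d`: the SC-depth of the graph `E` on vertex set `s` is at most `d`. -/
inductive SCDepthLe : Finset V → (V → V → Prop) → ℕ → Prop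
  | single (v : V) (E : V → V → Prop) (d : ℕ) : SCDepthLe {v} E d
  | step (s : Finset V) (E H : V → V → Prop) (d : ℕ) :
      IsSC s E H →
      (∀ C, IsComponent s H C → SCDepthLe C H d) →
      SCDepthLe s E (d + 1)

/-! ### Auxiliary lemmas -/

lemma reach_mono {s t : Finset V} (hst : s ⊆ t) {H : V → V → Prop} {v w : V}
    (h : Reach s H v w) : Reach t H v w :=
  Relation.ReflTransGen.mono (r := fun a b => a ∈ s ∧ b ∈ s ∧ H a b)
    (p := fun a b => a ∈ t ∧ b ∈ t ∧ H a b) (fun a b ⟨ha, hb, hab⟩ => ⟨hst ha, hst hb, hab⟩) v w h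

lemma component_mono {s t : Finset V} (hst : s ⊆ t) (H : V → V → Prop) (v : V) :
    component s H v ⊆ component t H v := by
  intro w hw
  simp only [component, Finset.mem_filter] at hw ⊢
  exact ⟨hst hw.1, reach_mono hst hw.2⟩

lemma mem_component_self {s : Finset V} {H : V → V → Prop} {v : V} (hv : v ∈ s) :
    v ∈ component s H v := by
  simp only [component, Finset.mem_filter]
  exact ⟨hv, Relation.ReflTransGen.refl⟩

lemma component_subset {s : Finset V} {H : V → V → Prop} {v : V} :
    component s H v ⊆ s := Finset.filter_subset _ _

lemma reach_congr {s : Finset V} {H H' : V → V → Prop}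
    (h : ∀ u ∈ s, ∀ v ∈ s, H u v ↔ H' u v) {v w : V} :
    Reach s H v w ↔ Reach s H' v w := by
  constructor
  · exact Relation.ReflTransGen.mono (r := fun a b => a ∈ s ∧ b ∈ s ∧ H a b)
      (p := fun a b => a ∈ s ∧ b ∈ s ∧ H' a b)
      (fun a b ⟨ha, hb, hab⟩ => ⟨ha, hb, (h a ha b hb).mp hab⟩) v w
  · exact Relation.ReflTransGen.mono (r := fun a b => a ∈ s ∧ b ∈ s ∧ H' a b)
      (p := fun a b => a ∈ s ∧ b ∈ s ∧ H a b)
      (fun a b ⟨ha, hb, hab⟩ => ⟨ha, hb, (h a ha b hb).mpr hab⟩) v w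

lemma component_congr {s : Finset V} {H H' : V → V → Prop}
    (h : ∀ u ∈ s, ∀ v ∈ s, H u v ↔ H' u v) (v : V) :
    component s H v = component s H' v := by
  apply Finset.filter_congr
  intro w _
  exact reach_congr h

lemma isSC_restrict {s t : Finset V} {E H : V → V → Prop} (hts : t ⊆ s)
    (h : IsSC s E H) : IsSC t E H := by
  obtain ⟨A, h1, h2⟩ := h
  exact ⟨A, fun u hu v hv huv => h1 u (hts hu) v (hts hv) huv, fun u hu => h2 u (hts hu)⟩

/-- Congruence: SC-depth only depends on the graph restricted to `s`. -/
lemma SCDepthLe.congr {s : Finset V} {E E' : V → V → Prop} {d : ℕ}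
    (h : SCDepthLe s E d) (hE : ∀ u ∈ s, ∀ v ∈ s, E u v ↔ E' u v) :
    SCDepthLe s E' d := by
  induction h with
  | single v E d => exact SCDepthLe.single v E' d
  | step s E H d hsc hcomp IH =>
    obtain ⟨A, h1, h2⟩ := hsc
    refine SCDepthLe.step s E' H d ⟨A, ?_, ?_⟩ hcomp
    · intro u hu v hv huv
      rw [h1 u hu v hv huv, hE u hu v hv]
    · intro u hu
      rw [h2 u hu, hE u hu u hu]

/-- Monotonicity: SC-depth of a nonempty induced subgraph. -/
lemma SCDepthLe.mono {s : Finset V} {E : V → V → Prop} {d : ℕ}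
    (h : SCDepthLe s E d) : ∀ t ⊆ s, t.Nonempty → SCDepthLe t E d := by
  induction h with
  | single v E d =>
    intro t hts htne
    rcases Finset.subset_singleton_iff.mp hts with rfl | rfl
    · exact absurd htne (by simp)
    · exact SCDepthLe.single v E d
  | step s E H d hsc hcomp IH =>
    intro t hts htne
    refine SCDepthLe.step t E H d (isSC_restrict hts hsc) ?_
    rintro C ⟨v, hv, rfl⟩
    exact IH (component s H v) ⟨v, hts hv, rfl⟩ (component t H v)
      (component_mono hts H v) ⟨v, mem_component_self hv⟩

/-- Weakening the depth bound. -/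
lemma SCDepthLe.weaken {s : Finset V} {E : V → V → Prop} {d : ℕ}
    (h : SCDepthLe s E d) : ∀ d', d ≤ d' → SCDepthLe s E d' := by
  induction h with
  | single v E d => intro d' _; exact SCDepthLe.single v E d'
  | step s E H d hsc hcomp IH =>
    intro d' hd'
    obtain ⟨d'', rfl⟩ : ∃ d'', d' = d'' + 1 := ⟨d' - 1, by omega⟩
    exact SCDepthLe.step s E H d'' hsc (fun C hC => IH C hC d'' (by omega))

/-! ### Direction 1: SC-depth bounds flip-depth -/

lemma isKFlip_of_isSC {k : ℕ} (hk : 2 ≤ k) {s : Finset V} {E H : V → V → Prop}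
    (h : IsSC s E H) : IsKFlip k s E H := by
  obtain ⟨A, h1, h2⟩ := h
  set z : Fin k := ⟨0, by omega⟩ with hz
  set o : Fin k := ⟨1, by omega⟩ with ho
  refine ⟨fun u => if u ∈ A then z else o, fun i j => i = z ∧ j = z, by tauto, ?_, h2⟩
  intro u hu v hv huv
  rw [h1 u hu v hv huv]
  have hP : ∀ w : V, ((if w ∈ A then z else o) = z) ↔ w ∈ A := by
    intro w
    by_cases hw : w ∈ A <;> simp [hw, hz, ho, Fin.ext_iff]
  simp only [hP]
  tauto

lemma direction1 {k : ℕ} (hk : 2 ≤ k) {s : Finset V} {E : V → V → Prop} {d : ℕ}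
    (h : SCDepthLe s E d) : FlipDepthLe k s E d := by
  induction h with
  | single v E d => exact FlipDepthLe.single v E d
  | step s E H d hsc hcomp IH =>
    exact FlipDepthLe.step s E H d (isKFlip_of_isSC hk hsc) IH

/-! ### SC chains -/

noncomputable def scApply (A : Finset V) (E : V → V → Prop) : V → V → Prop :=
  fun u v => if u = v then E u v else Xor' (u ∈ A ∧ v ∈ A) (E u v)

noncomputable def applyList : List (Finset V) → (V → V → Prop) → (V → V → Prop)
  | [], E => E
  | A :: L, E => applyList L (scApply A E)

inductive SCChain : Finset V → (V → V → Prop) → (V → V → Prop) → ℕ → Prop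
  | refl (s : Finset V) (E : V → V → Prop) : SCChain s E E 0
  | step {s : Finset V} {E E' H : V → V → Prop} {m : ℕ} :
      IsSC s E E' → SCChain s E' H m → SCChain s E H (m + 1)

lemma isSC_scApply (s : Finset V) (A : Finset V) (E : V → V → Prop) :
    IsSC s E (scApply A E) := by
  refine ⟨A, ?_, ?_⟩
  · intro u hu v hv huv
    simp only [scApply, if_neg huv, Xor', xor_def]
    tauto
  · intro u hu
    simp [scApply]

lemma scChain_applyList (s : Finset V) :
    ∀ (L : List (Finset V)) (E : V → V → Prop), SCChain s E (applyList L E) L.length := by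
  intro L
  induction L with
  | nil => intro E; exact SCChain.refl s E
  | cons A L IH => intro E; exact SCChain.step (isSC_scApply s A E) (IH (scApply A E))

lemma scChain_restrict {s t : Finset V} {E H : V → V → Prop} {m : ℕ}
    (h : SCChain s E H m) (hts : t ⊆ s) : SCChain t E H m := by
  induction h with
  | refl E1 => exact SCChain.refl t E1
  | step hsc _ IH => exact SCChain.step (isSC_restrict hts hsc) IH

/-- Key lemma: a chain of `m+1` subset complements from `E` to `H` followed by depth-`d`
decompositions of the components of `H` gives SC-depth `d + m + 1` for `E`. -/
lemma scChain_depth {d : ℕ} : ∀ (m : ℕ) (s : Finset V) (E H : V → V → Prop),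
    SCChain s E H (m + 1) →
    (∀ C, IsComponent s H C → SCDepthLe C H d) →
    SCDepthLe s E (d + m + 1) := by
  intro m
  induction m with
  | zero =>
    intro s E H hchain hcomp
    cases hchain with
    | step hsc hrest =>
      cases hrest
      exact SCDepthLe.step s E H d hsc hcomp
  | succ m IH =>
    intro s E H hchain hcomp
    cases hchain with
    | @step _ E' _ _ hsc hrest =>
    refine SCDepthLe.step s E E' (d + m + 1) hsc ?_
    rintro C ⟨v, hv, rfl⟩
    refine IH (component s E' v) E' H
      (scChain_restrict hrest component_subset) ?_
    rintro D ⟨w, hw, rfl⟩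
    have hws : w ∈ s := component_subset hw
    have h1 : SCDepthLe (component s H w) H d := hcomp _ ⟨w, hws, rfl⟩
    exact h1.mono _ (component_mono component_subset H w) ⟨w, mem_component_self hw⟩

/-! ### Parity computation for iterated subset complements -/

lemma applyList_diag : ∀ (L : List (Finset V)) (E : V → V → Prop) (u : V),
    applyList L E u u ↔ E u u := by
  intro L
  induction L with
  | nil => intro E u; exact Iff.rfl
  | cons A L IH => intro E u; rw [applyList, IH]; simp [scApply]

lemma applyList_spec : ∀ (L : List (Finset V)) (E : V → V → Prop) (u v : V), u ≠ v →
    (applyList L E u v ↔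
      Xor' (Odd (L.countP (fun A => decide (u ∈ A ∧ v ∈ A)))) (E u v)) := by
  intro L
  induction L with
  | nil =>
    intro E u v huv
    simp [applyList, Xor', Nat.odd_iff]
  | cons A L IH =>
    intro E u v huv
    rw [applyList, IH (scApply A E) u v huv, List.countP_cons]
    simp only [scApply, if_neg huv, decide_eq_true_eq]
    by_cases hA : u ∈ A ∧ v ∈ A <;>
      simp only [hA, if_true, if_false, Nat.odd_iff] <;>
      · constructor <;> · rintro h; rcases h with ⟨h1, h2⟩ | ⟨h1, h2⟩ <;> simp_all [Xor', xor_def] <;> omega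

lemma odd_countP_flatMap {α β : Type*} (f : α → List β) (p : β → Bool) :
    ∀ l : List α, (Odd ((l.flatMap f).countP p) ↔
      Odd (l.countP (fun a => decide (Odd ((f a).countP p))))) := by
  intro l
  induction l with
  | nil => simp
  | cons a l IH =>
    rw [List.flatMap_cons, List.countP_append, List.countP_cons]
    simp only [decide_eq_true_eq, Nat.odd_iff] at IH ⊢
    by_cases h : (f a).countP p % 2 = 1 <;> simp only [h, if_true, if_false] <;> omega

lemma countP_eq_one_of {α : Type*} {l : List α} (hl : l.Nodup) {p : α → Bool} {a : α}
    (ha : a ∈ l) (hpa : p a = true) (h : ∀ x ∈ l, p x = true → x = a) :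
    l.countP p = 1 := by
  induction l with
  | nil => cases ha
  | cons b t IH =>
    rw [List.countP_cons]
    rcases List.mem_cons.mp ha with rfl | hat
    · have ht : t.countP p = 0 := by
        rw [List.countP_eq_zero]
        intro x hx hpx
        exact (List.nodup_cons.mp hl).1 ((h x (List.mem_cons_of_mem _ hx) hpx) ▸ hx)
      simp [ht, hpa]
    · have hb : ¬ (p b = true) := by
        intro hpb
        have := h b (List.mem_cons_self) hpb
        subst this
        exact (List.nodup_cons.mp hl).1 hat
      rw [IH (List.nodup_cons.mp hl).2 hat
        (fun x hx hpx => h x (List.mem_cons_of_mem _ hx) hpx)]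
      simp [hb]

lemma length_flatMap_le {α β : Type*} (f : α → List β) (n : ℕ)
    (hf : ∀ a, (f a).length ≤ n) : ∀ l : List α, (l.flatMap f).length ≤ n * l.length := by
  intro l
  induction l with
  | nil => simp
  | cons a l IH =>
    rw [List.flatMap_cons, List.length_append, List.length_cons, Nat.mul_succ]
    have := hf a
    omega

/-- Any `k`-flip can be simulated by a nonempty list of at most `3k²` subset
complementations. -/
lemma flip_simulation {k : ℕ} (hk : 2 ≤ k) {s : Finset V} {E H : V → V → Prop}
    (hflip : IsKFlip k s E H) :
    ∃ L : List (Finset V), 1 ≤ L.length ∧ L.length ≤ 3 * k ^ 2 ∧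
      (∀ u ∈ s, ∀ v ∈ s, applyList L E u v ↔ H u v) := by
  classical
  obtain ⟨P, F, hFsym, hHE, hdiag⟩ := hflip
  set parts : Fin k → Finset V := fun i => s.filter (fun w => P w = i) with hparts
  set block : Fin k × Fin k → List (Finset V) := fun p =>
    if F p.1 p.2 then
      (if p.1 = p.2 then [parts p.1]
        else [parts p.1 ∪ parts p.2, parts p.1, parts p.2])
    else [] with hblock
  set pairL : List (Fin k × Fin k) :=
    (List.finRange k ×ˢ List.finRange k).filter (fun p => decide (p.1 ≤ p.2)) with hpairL
  refine ⟨∅ :: pairL.flatMap block, by simp, ?_, ?_⟩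
  · -- length bound
    have h1 : (pairL.flatMap block).length ≤ 3 * pairL.length := by
      apply length_flatMap_le
      intro p
      simp only [hblock]
      split_ifs <;> simp
    have h2 : pairL.length < k * k := by
      have : pairL.length < (List.finRange k ×ˢ List.finRange k).length := by
        rw [hpairL]
        apply List.length_filter_lt_length_iff_exists.mpr
        refine ⟨(⟨1, by omega⟩, ⟨0, by omega⟩), ?_, by simp [Fin.le_def]⟩
        exact List.mem_product.mpr ⟨List.mem_finRange _, List.mem_finRange _⟩
      simpa [List.length_product, List.length_finRange] using this
    simp only [List.length_cons]
    nlinarith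
  · -- correctness
    intro u hu v hv
    by_cases huv : u = v
    · subst huv
      rw [applyList_diag, hdiag u hu]
    · rw [applyList_spec _ _ _ _ huv, hHE u hu v hv huv]
      have hmem : ∀ w ∈ s, ∀ i : Fin k, (w ∈ parts i ↔ P w = i) := by
        intro w hw i
        simp [hparts, hw]
      -- parity of the whole list
      have hcount : Odd ((∅ :: pairL.flatMap block).countP
          (fun A => decide (u ∈ A ∧ v ∈ A))) ↔ F (P u) (P v) := by
        rw [List.countP_cons]
        simp only [Finset.notMem_empty, false_and, decide_eq_true_eq, if_false,
          Nat.add_zero]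
        rw [odd_countP_flatMap]
        -- parity of each block
        have hblockodd : ∀ p ∈ pairL,
            (Odd ((block p).countP (fun A => decide (u ∈ A ∧ v ∈ A))) ↔
              (F p.1 p.2 ∧ ((P u = p.1 ∧ P v = p.2) ∨ (P u = p.2 ∧ P v = p.1)))) := by
          rintro ⟨i, j⟩ hp
          have hij : i ≤ j := by
            have := List.of_mem_filter hp
            simpa using this
          simp only [hblock]
          by_cases hF : F i j
          · simp only [hF, if_true, true_and]
            by_cases hd : i = j
            · subst hd
              rw [if_pos (rfl : i = i)]
              simp only [List.countP_cons, List.countP_nil, Bool.decide_and,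
                Bool.and_eq_true, decide_eq_true_eq, hmem u hu, hmem v hv]
              split_ifs with h1
              · simp [Nat.odd_iff, h1.1, h1.2]
              · simp only [Nat.odd_iff]
                norm_num
                tauto
            · simp only [if_neg hd, List.countP_cons, List.countP_nil,
                decide_eq_true_eq, Finset.mem_union, hmem u hu, hmem v hv]
              have hinj : ∀ (w : V) (x y : Fin k), P w = x → P w = y → x = y :=
                fun w x y hx hy => hx ▸ hy
              split_ifs with h1 h2 h3 <;> simp only [Nat.odd_iff] <;> norm_num <;> tauto
          · simp [hF]
        -- now count over the pair list
        have hQ : ∀ p ∈ pairL,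
            ((fun p => decide (Odd ((block p).countP (fun A => decide (u ∈ A ∧ v ∈ A))))) p = true ↔
              (F p.1 p.2 ∧ ((P u = p.1 ∧ P v = p.2) ∨ (P u = p.2 ∧ P v = p.1)))) := by
          intro p hp
          simp only [decide_eq_true_eq]
          exact hblockodd p hp
        set p0 : Fin k × Fin k := if P u ≤ P v then (P u, P v) else (P v, P u) with hp0
        have hp0mem : p0 ∈ pairL := by
          rw [hpairL]
          apply List.mem_filter.mpr
          constructor
          · rcases p0 with ⟨x, y⟩
            exact List.mem_product.mpr ⟨List.mem_finRange _, List.mem_finRange _⟩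
          · simp only [hp0]
            split_ifs with h
            · simpa using h
            · simpa using le_of_not_ge h
        have hnodup : pairL.Nodup :=
          ((List.nodup_finRange k).product (List.nodup_finRange k)).filter _
        by_cases hFuv : F (P u) (P v)
        · rw [countP_eq_one_of hnodup hp0mem ?_ ?_]
          · simp [hFuv, Nat.odd_iff]
          · rw [(hQ p0 hp0mem)]
            simp only [hp0]
            split_ifs with h
            · exact ⟨hFuv, Or.inl ⟨rfl, rfl⟩⟩
            · exact ⟨(hFsym _ _).mp hFuv, Or.inr ⟨rfl, rfl⟩⟩
          · intro p hp hpq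
            rw [hQ p hp] at hpq
            obtain ⟨hFp, hor⟩ := hpq
            have hple : p.1 ≤ p.2 := by
              have := List.of_mem_filter hp
              simpa using this
            rcases hor with ⟨h1, h2⟩ | ⟨h1, h2⟩
            · have : P u ≤ P v := h1 ▸ h2 ▸ hple
              simp only [hp0, if_pos this]
              exact Prod.ext h1.symm h2.symm
            · have hvu : P v ≤ P u := h2 ▸ h1 ▸ hple
              by_cases heq : P u ≤ P v
              · have : P u = P v := le_antisymm heq hvu
                simp only [hp0, if_pos heq]
                exact Prod.ext (h2.symm.trans this.symm) (h1.symm.trans this)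
              · simp only [hp0, if_neg heq]
                exact Prod.ext h2.symm h1.symm
        · rw [List.countP_eq_zero.mpr ?_]
          · simp [hFuv]
          · intro p hp hpq
            rw [hQ p hp] at hpq
            obtain ⟨hFp, hor⟩ := hpq
            rcases hor with ⟨h1, h2⟩ | ⟨h1, h2⟩
            · exact hFuv (h1 ▸ h2 ▸ hFp)
            · exact hFuv ((hFsym _ _).mp (h1 ▸ h2 ▸ hFp))
      rw [hcount]
      simp only [Xor', xor_def]
      tauto

/-! ### Direction 2 -/

lemma direction2 {k : ℕ} (hk : 2 ≤ k) {s : Finset V} {E : V → V → Prop} {d : ℕ}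
    (h : FlipDepthLe k s E d) : SCDepthLe s E (3 * k ^ 2 * d) := by
  induction h with
  | single v E d => exact SCDepthLe.single v E _
  | step s E H d hflip hcomp IH =>
    obtain ⟨L, hL1, hL2, hLcorr⟩ := flip_simulation hk hflip
    obtain ⟨m, hm⟩ : ∃ m, L.length = m + 1 := ⟨L.length - 1, by omega⟩
    have hchain : SCChain s E (applyList L E) (m + 1) := hm ▸ scChain_applyList s L E
    have hdepth : SCDepthLe s E (3 * k ^ 2 * d + m + 1) := by
      refine scChain_depth m s E (applyList L E) hchain ?_
      rintro C ⟨v, hv, rfl⟩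
      have hceq : component s (applyList L E) v = component s H v :=
        component_congr (fun u hu w hw => hLcorr u hu w hw) v
      rw [hceq]
      refine (IH (component s H v) ⟨v, hv, rfl⟩).congr ?_
      intro u hu w hw
      exact (hLcorr u (component_subset hu) w (component_subset hw)).symm
    refine hdepth.weaken _ ?_
    have : m + 1 ≤ 3 * k ^ 2 := hm ▸ hL2
    calc 3 * k ^ 2 * d + m + 1 ≤ 3 * k ^ 2 * d + 3 * k ^ 2 := by omega
    _ = 3 * k ^ 2 * (d + 1) := by ring


/-- For every graph `G` and every `k ≥ 2`: the `k`-flip-depth of `G` is at most its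
SC-depth, and its SC-depth is at most `3k²` times its `k`-flip-depth. -/
theorem flipDepth_le_SCDepth_le (k : ℕ) (hk : 2 ≤ k) (s : Finset V) (E : V → V → Prop)
    (hsym : ∀ u v, E u v → E v u) :
    (∀ d, SCDepthLe s E d → FlipDepthLe k s E d) ∧
    (∀ d, FlipDepthLe k s E d → SCDepthLe s E (3 * k ^ 2 * d)) := by
  exact ⟨fun d h => direction1 hk h, fun d h => direction2 hk h⟩
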